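/- Let G be a group in which every proper subgroup is contained in a maximal subgroup. Then the following are equivalent: (a) every subset S ⊆ G that weakly generates G also generates G; (b) every maximal subgroup of G is normal. -/

import Mathlib

/-- `S` weakly generates `G`: the image of `S` in the abelianization generates it. -/
def WeaklyGenerates {G : Type*} [Group G] (S : Set G) : Prop :=
  Subgroup.closure ((Abelianization.of : G →* Abelianization G) '' S) = ⊤

open scoped commutatorElement

lemma abel_ker_of {G : Type*} [Group G] :
    (Abelianization.of : G →* Abelianization G).ker = commutator G := by
  ext x
  exact QuotientGroup.eq_one_iff x

lemma weaklyGenerates_iff {G : Type*} [Group G] (S : Set G) :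
    WeaklyGenerates S ↔ Subgroup.closure S ⊔ commutator G = ⊤ := by
  have hsurj : Function.Surjective (Abelianization.of : G →* Abelianization G) :=
    QuotientGroup.mk'_surjective (commutator G)
  unfold WeaklyGenerates
  rw [← MonoidHom.map_closure]
  constructor
  · intro h
    have := congrArg (Subgroup.comap (Abelianization.of : G →* Abelianization G)) h
    rwa [Subgroup.comap_map_eq, abel_ker_of,
      (Subgroup.comap_top _ : Subgroup.comap _ ⊤ = ⊤)] at this
  · intro h
    have : Subgroup.comap (Abelianization.of : G →* Abelianization G)
        ((Subgroup.closure S).map Abelianization.of) = ⊤ := by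
      rw [Subgroup.comap_map_eq, abel_ker_of, h]
    rw [← Subgroup.comap_top (Abelianization.of : G →* Abelianization G)] at this
    exact Subgroup.comap_injective hsurj this

lemma normal_of_commutator_le {G : Type*} [Group G] {M : Subgroup G}
    (h : commutator G ≤ M) : M.Normal := by
  constructor
  intro n hn g
  have hc : ⁅g, n⁆ ∈ M := h (Subgroup.commutator_mem_commutator (Subgroup.mem_top g)
    (Subgroup.mem_top n))
  have : g * n * g⁻¹ = ⁅g, n⁆ * n := by group
  rw [this]
  exact M.mul_mem hc hn

lemma commutator_le_of_coatom_normal {G : Type*} [Group G] {M : Subgroup G}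
    (hM : IsCoatom M) (hN : M.Normal) : commutator G ≤ M := by
  have key : ∀ K : Subgroup (G ⧸ M), K = ⊥ ∨ K = ⊤ := by
    intro K
    have hle : M ≤ K.comap (QuotientGroup.mk' M) := by
      intro x hx
      have : QuotientGroup.mk' M x = 1 := (QuotientGroup.eq_one_iff x).2 hx
      exact Subgroup.mem_comap.2 (this ▸ K.one_mem)
    rcases eq_or_lt_of_le hle with heq | hlt
    · left
      rw [eq_bot_iff]
      intro z hz
      obtain ⟨y, rfl⟩ := QuotientGroup.mk'_surjective M z
      have hy : y ∈ M := heq ▸ (Subgroup.mem_comap.2 hz)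
      exact Subgroup.mem_bot.2 ((QuotientGroup.eq_one_iff y).2 hy)
    · right
      have h2 := hM.2 _ hlt
      rw [← Subgroup.comap_top (QuotientGroup.mk' M)] at h2
      exact Subgroup.comap_injective (QuotientGroup.mk'_surjective M) h2
  have comm : ∀ a b : G ⧸ M, a * b = b * a := by
    intro a b
    by_cases ha : a = 1
    · simp [ha]
    rcases key (Subgroup.zpowers a) with hbot | htop
    · exact absurd (hbot ▸ Subgroup.mem_zpowers a) (by simp [ha])
    · obtain ⟨n, rfl⟩ : b ∈ Subgroup.zpowers a := htop ▸ Subgroup.mem_top b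
      exact ((Commute.refl a).zpow_right n).eq
  rw [commutator_def, Subgroup.commutator_le]
  intro g _ h _
  rw [← QuotientGroup.eq_one_iff]
  show QuotientGroup.mk' M ⁅g, h⁆ = 1
  rw [map_commutatorElement, commutatorElement_eq_one_iff_commute]
  exact comm _ _

theorem weakly_generating_implies_generating_iff_maximal_normal
    {G : Type*} [Group G]
    (hmax : ∀ H : Subgroup G, H ≠ ⊤ → ∃ M : Subgroup G, IsCoatom M ∧ H ≤ M) :
    (∀ S : Set G, WeaklyGenerates S → Subgroup.closure S = ⊤) ↔
      (∀ M : Subgroup G, IsCoatom M → M.Normal) := by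
  constructor
  · intro h M hM
    apply normal_of_commutator_le
    by_contra hc
    have hsup : M ⊔ commutator G = ⊤ := by
      rcases lt_or_eq_of_le (le_sup_left : M ≤ M ⊔ commutator G) with hlt | heq
      · exact hM.2 _ hlt
      · exact absurd (le_sup_right.trans heq.symm.le) hc
    have hwg : WeaklyGenerates (M : Set G) := by
      rw [weaklyGenerates_iff, Subgroup.closure_eq]; exact hsup
    have := h _ hwg
    rw [Subgroup.closure_eq] at this
    exact hM.1 this
  · intro h S hS
    by_contra hne
    obtain ⟨M, hM, hle⟩ := hmax _ hne
    have hcomm : commutator G ≤ M := commutator_le_of_coatom_normal hM (h M hM)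
    rw [weaklyGenerates_iff] at hS
    exact hM.1 (top_le_iff.1 (hS ▸ sup_le hle hcomm))
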